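/- Let G be a nontrivial finite group and let P be a finite free G-poset. Then there exists a G-map from P to Q_0 G (equivalently, xind P = 0) if and only if for every p ∈ P and every g ∈ G with g ≠ 1, the elements p and g•p are not joined by a path in the comparability graph of P (i.e., they lie in different connected components). -/

import Mathlib

/-- The comparability graph of a poset: distinct `u, v` are adjacent iff they are comparable. -/
def compGraph (P : Type*) [PartialOrder P] : SimpleGraph P where
  Adj u v := u ≠ v ∧ (u ≤ v ∨ v ≤ u)
  symm := ⟨fun _ _ h => ⟨h.1.symm, h.2.symm⟩⟩
  loopless := ⟨fun _ h => h.1 rfl⟩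

/-- `f : P → G × {0,…,n}` is a `G`-map to the `G`-poset `Q_n G`, whose order is
`(g,i) ≤ (h,j)` iff `(g,i) = (h,j)` or `i < j`, and whose action is `g • (h,i) = (g h, i)`. -/
def IsGMapToQ (G : Type*) [Group G] {P : Type*} [PartialOrder P] [MulAction G P]
    (n : ℕ) (f : P → G × Fin (n + 1)) : Prop :=
  (∀ p q : P, p ≤ q → f p = f q ∨ (f p).2 < (f q).2) ∧
  ∀ (g : G) (p : P), f (g • p) = (g * (f p).1, (f p).2)

section Aux

variable {G : Type*} [Group G] {P : Type*} [PartialOrder P] [MulAction G P]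
variable (hmono : ∀ (g : G) (p q : P), p ≤ q → g • p ≤ g • q)

/-- The graph homomorphism of the comparability graph given by the action of `g`. -/
def gHom (g : G) : compGraph P →g compGraph P where
  toFun := (g • ·)
  map_rel' := fun {u v} h =>
    ⟨fun e => h.1 (MulAction.injective g e), h.2.imp (hmono g u v) (hmono g v u)⟩

/-- The induced action of `g` on connected components. -/
def gC (g : G) : (compGraph P).ConnectedComponent → (compGraph P).ConnectedComponent :=
  SimpleGraph.ConnectedComponent.map (gHom hmono g)

lemma gC_mk (g : G) (p : P) :
    gC hmono g ((compGraph P).connectedComponentMk p)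
      = (compGraph P).connectedComponentMk (g • p) := rfl

lemma gC_mul (g h : G) (c : (compGraph P).ConnectedComponent) :
    gC hmono (g * h) c = gC hmono g (gC hmono h c) := by
  refine c.ind fun p => ?_
  rw [gC_mk, gC_mk, gC_mk, mul_smul]

lemma gC_one (c : (compGraph P).ConnectedComponent) : gC hmono 1 c = c := by
  refine c.ind fun p => ?_
  rw [gC_mk, one_smul]

/-- The orbit equivalence relation on connected components. -/
def orbSetoid : Setoid ((compGraph P).ConnectedComponent) where
  r c d := ∃ g : G, gC hmono g c = d
  iseqv := ⟨fun c => ⟨1, gC_one hmono c⟩,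
    fun {c d} ⟨g, hg⟩ => ⟨g⁻¹, by rw [← hg, ← gC_mul, inv_mul_cancel, gC_one]⟩,
    fun {c d e} ⟨g, hg⟩ ⟨h, hh⟩ => ⟨h * g, by rw [gC_mul, hg, hh]⟩⟩

/-- A choice of orbit representative. -/
noncomputable def repC (c : (compGraph P).ConnectedComponent) :
    (compGraph P).ConnectedComponent :=
  (Quotient.mk (orbSetoid hmono) c).out

lemma repC_spec (c : (compGraph P).ConnectedComponent) :
    ∃ g : G, gC hmono g (repC hmono c) = c := by
  have := Quotient.mk_out (s := orbSetoid hmono) c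
  exact this

lemma repC_gC (g : G) (c : (compGraph P).ConnectedComponent) :
    repC hmono (gC hmono g c) = repC hmono c := by
  unfold repC
  congr 1
  exact (Quotient.sound (⟨g, rfl⟩ : (orbSetoid hmono).r c (gC hmono g c))).symm

/-- The equivariant labelling of components by group elements. -/
noncomputable def phiC (c : (compGraph P).ConnectedComponent) : G :=
  Classical.choose (repC_spec hmono c)

lemma phiC_spec (c : (compGraph P).ConnectedComponent) :
    gC hmono (phiC hmono c) (repC hmono c) = c :=
  Classical.choose_spec (repC_spec hmono c)

end Aux

theorem stmt0 {G : Type*} [Group G] [Finite G] [Nontrivial G]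
    {P : Type*} [PartialOrder P] [Finite P] [MulAction G P]
    (hmono : ∀ (g : G) (p q : P), p ≤ q → g • p ≤ g • q)
    (hfree : ∀ (g : G) (p : P), g • p = p → g = 1) :
    (∃ f : P → G × Fin 1, IsGMapToQ G 0 f) ↔
      ∀ (p : P) (g : G), g ≠ 1 → ¬ (compGraph P).Reachable p (g • p) := by
  constructor
  · rintro ⟨f, hle, heq⟩ p g hg hreach
    -- f is constant on connected components
    have hwalk : ∀ {u v : P}, (compGraph P).Walk u v → f u = f v := by
      intro u v w
      induction w with
      | nil => rfl
      | cons ha _ ih =>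
        rename_i a b c hw
        have hab : f a = f b := by
          have h2 : (f a).2 = (f b).2 := Subsingleton.elim _ _
          rcases ha.2 with h' | h'
          · rcases hle a b h' with h'' | h''
            · exact h''
            · exact absurd (h2 ▸ h'') (lt_irrefl _)
          · rcases hle b a h' with h'' | h''
            · exact h''.symm
            · exact absurd (h2 ▸ h'') (lt_irrefl _)
        exact hab.trans ih
    have hconst : ∀ {u v : P}, (compGraph P).Reachable u v → f u = f v :=
      fun h => h.elim fun w => hwalk w
    have h1 : f p = f (g • p) := hconst hreach
    have h2 := heq g p
    rw [h2] at h1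
    have : (f p).1 = g * (f p).1 := congrArg Prod.fst h1
    have h3 : g * (f p).1 = 1 * (f p).1 := by rw [one_mul]; exact this.symm
    exact hg (mul_right_cancel h3)
  · intro H
    -- the action on components is free
    have hRfree : ∀ (g : G) (c : (compGraph P).ConnectedComponent),
        gC hmono g c = c → g = 1 := by
      intro g c
      refine c.ind (fun p => ?_)
      intro h
      rw [gC_mk] at h
      have hr : (compGraph P).Reachable (g • p) p :=
        (SimpleGraph.ConnectedComponent.eq).mp h
      by_contra hg
      exact H p g hg hr.symm
    have phiC_equiv : ∀ (g : G) (c : (compGraph P).ConnectedComponent),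
        phiC hmono (gC hmono g c) = g * phiC hmono c := by
      intro g c
      have h1 : gC hmono (phiC hmono (gC hmono g c)) (repC hmono c) = gC hmono g c := by
        have := phiC_spec hmono (gC hmono g c)
        rwa [repC_gC] at this
      have h2 : gC hmono (g * phiC hmono c) (repC hmono c) = gC hmono g c := by
        rw [gC_mul, phiC_spec]
      -- uniqueness
      set a := phiC hmono (gC hmono g c)
      set b := g * phiC hmono c
      have : gC hmono (b⁻¹ * a) (repC hmono c) = repC hmono c := by
        rw [gC_mul, h1, ← h2, ← gC_mul, inv_mul_cancel, gC_one]
      have hb : b⁻¹ * a = 1 := hRfree _ _ this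
      calc a = b * (b⁻¹ * a) := by group
        _ = b := by rw [hb, mul_one]
    refine ⟨fun p => (phiC hmono ((compGraph P).connectedComponentMk p), 0), ?_, ?_⟩
    · intro p q hpq
      left
      dsimp only
      rcases eq_or_ne p q with rfl | hne
      · rfl
      · have : (compGraph P).connectedComponentMk p = (compGraph P).connectedComponentMk q :=
          SimpleGraph.ConnectedComponent.sound ((SimpleGraph.Adj.reachable ⟨hne, Or.inl hpq⟩))
        rw [this]
    · intro g p
      dsimp only
      have : (compGraph P).connectedComponentMk (g • p)
          = gC hmono g ((compGraph P).connectedComponentMk p) := rfl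
      rw [this, phiC_equiv]
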